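/- Let ρ₁ : F₁ → F₃ and ρ₂ : F₂ → F₃ be surjective homomorphisms of finite Frobenius groups, each Fᵢ having cyclic kernel Kᵢ and a fixed complement isomorphic to a common cyclic group C, such that ρ₁ and ρ₂ restrict to isomorphisms on the copies of C and map Kᵢ onto K₃. Then the fiber product F₁ ×_{F₃} F₂ contains a subgroup H which is a Frobenius group with complement the diagonal copy of C and cyclic kernel, such that the first projection maps H onto F₁. -/

import Mathlib

lemma zpowers_isCyclic {G : Type*} [Group G] (x : G) : IsCyclic ↥(Subgroup.zpowers x) :=
  ⟨⟨⟨x, Subgroup.mem_zpowers x⟩, fun ⟨u, hu⟩ => by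
    obtain ⟨n, hn⟩ := Subgroup.mem_zpowers_iff.mp hu
    exact Subgroup.mem_zpowers_iff.mpr ⟨n, Subtype.ext (by simp [← hn])⟩⟩⟩

lemma subgroup_gen {G : Type*} [Group G] (H : Subgroup G) (hc : IsCyclic ↥H) :
    ∃ h ∈ H, H = Subgroup.zpowers h := by
  obtain ⟨g, hg⟩ := hc.exists_generator
  refine ⟨g.1, g.2, le_antisymm (fun x hx => ?_) (Subgroup.zpowers_le.mpr g.2)⟩
  obtain ⟨n, hn⟩ := Subgroup.mem_zpowers_iff.mp (hg ⟨x, hx⟩)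
  exact Subgroup.mem_zpowers_iff.mpr ⟨n, by simpa using congrArg Subtype.val hn⟩

lemma conj_iter {G : Type*} [Group G] {c k : G} {a : ℤ} (h : c * k * c⁻¹ = k ^ a) :
    ∀ j : ℕ, c ^ j * k * (c ^ j)⁻¹ = k ^ (a ^ j) := by
  intro j
  induction j with
  | zero => simp
  | succ j ih =>
    have h1 : c ^ (j + 1) * k * (c ^ (j + 1))⁻¹ = c * (c ^ j * k * (c ^ j)⁻¹) * c⁻¹ := by
      group
    rw [h1, ih, ← conj_zpow (i := a ^ j), h, ← zpow_mul, ← pow_succ']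

lemma lift_one (p : ℕ) (hp : p.Prime) (k : ℕ) (hk : 1 ≤ k) (x : ℤ)
    (h : (p : ℤ) ^ k ∣ x - 1) : (p : ℤ) ^ (k + 1) ∣ x ^ p - 1 := by
  have h1 : (p : ℤ) ∣ x - 1 := (dvd_pow_self (p : ℤ) (by omega : k ≠ 0)).trans h
  have hs : (p : ℤ) ∣ ∑ i ∈ Finset.range p, x ^ i := by
    have hd : (p : ℤ) ∣ ∑ i ∈ Finset.range p, (x ^ i - 1) :=
      Finset.dvd_sum fun i _ => h1.trans (by simpa using sub_dvd_pow_sub_pow x 1 i)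
    have he : ∑ i ∈ Finset.range p, (x ^ i - 1)
        = (∑ i ∈ Finset.range p, x ^ i) - (p : ℤ) := by
      rw [Finset.sum_sub_distrib]; simp
    rw [he] at hd
    have := dvd_add hd (dvd_refl (p : ℤ))
    simpa using this
  have h2 : (p : ℤ) ^ (k + 1) ∣ (x - 1) * ∑ i ∈ Finset.range p, x ^ i := by
    rw [pow_succ]
    exact mul_dvd_mul h hs
  rw [mul_comm] at h2
  rwa [geom_sum_mul] at h2

lemma lift_pow (p : ℕ) (hp : p.Prime) (x : ℤ) (h : (p : ℤ) ∣ x - 1) :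
    ∀ k : ℕ, (p : ℤ) ^ (k + 1) ∣ x ^ (p ^ k) - 1 := by
  intro k
  induction k with
  | zero => simpa using h
  | succ k ih =>
    have := lift_one p hp (k + 1) (by omega) (x ^ (p ^ k)) ih
    rwa [← pow_mul, ← pow_succ] at this

lemma per_prime (p : ℕ) (hp : p.Prime) (k : ℕ) (hk : 1 ≤ k) (M : ℕ) (hM : 0 < M)
    (hpM : ¬ p ∣ M) (a b : ℤ) (ha : (p : ℤ) ^ k ∣ a ^ M - 1) (hb : (p : ℤ) ^ k ∣ b ^ M - 1)
    (hab : (p : ℤ) ∣ a - b) : (p : ℤ) ^ k ∣ a - b := by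
  haveI : Fact p.Prime := ⟨hp⟩
  haveI : NeZero (p ^ k) := ⟨pow_ne_zero _ hp.pos.ne'⟩
  have castdvd : ∀ y : ℤ, (p : ℤ) ^ k ∣ y ↔ ((y : ZMod (p ^ k)) = 0) := fun y => by
    rw [ZMod.intCast_zmod_eq_zero_iff_dvd]; push_cast; rfl
  have castdvd1 : ∀ y : ℤ, (p : ℤ) ∣ y ↔ ((y : ZMod p) = 0) := fun y => by
    rw [ZMod.intCast_zmod_eq_zero_iff_dvd]
  have hAM : ((a : ZMod (p ^ k))) ^ M = 1 := by
    have h0 := (castdvd _).mp ha; push_cast at h0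
    rwa [sub_eq_zero] at h0
  have hBM : ((b : ZMod (p ^ k))) ^ M = 1 := by
    have h0 := (castdvd _).mp hb; push_cast at h0
    rwa [sub_eq_zero] at h0
  have hWB : ((a : ZMod (p ^ k)) * (b : ZMod (p ^ k)) ^ (M - 1)) * (b : ZMod (p ^ k))
      = (a : ZMod (p ^ k)) := by
    rw [mul_assoc, ← pow_succ, Nat.sub_add_cancel hM, hBM, mul_one]
  have hWM : ((a : ZMod (p ^ k)) * (b : ZMod (p ^ k)) ^ (M - 1)) ^ M = 1 := by
    rw [mul_pow, hAM, one_mul, ← pow_mul, mul_comm (M - 1) M, pow_mul, hBM, one_pow]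
  have hbp : ((b : ZMod p)) ^ M = 1 := by
    have h0 : (p : ℤ) ∣ b ^ M - 1 := (dvd_pow_self (p : ℤ) (by omega : k ≠ 0)).trans hb
    have h1 := (castdvd1 _).mp h0; push_cast at h1
    rwa [sub_eq_zero] at h1
  have habp : ((a : ZMod p)) = (b : ZMod p) := by
    have h1 := (castdvd1 _).mp hab; push_cast at h1
    rwa [sub_eq_zero] at h1
  have hwp : (p : ℤ) ∣ (a * b ^ (M - 1)) - 1 := by
    rw [castdvd1]; push_cast
    rw [sub_eq_zero, habp, ← pow_succ', Nat.sub_add_cancel hM, hbp]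
  have hWp : ((a : ZMod (p ^ k)) * (b : ZMod (p ^ k)) ^ (M - 1)) ^ (p ^ (k - 1)) = 1 := by
    have h0 := lift_pow p hp (a * b ^ (M - 1)) hwp (k - 1)
    rw [Nat.sub_add_cancel hk] at h0
    have h1 := (castdvd _).mp h0; push_cast at h1
    rwa [sub_eq_zero] at h1
  have hcop : Nat.Coprime M (p ^ (k - 1)) :=
    Nat.Coprime.pow_right _ ((hp.coprime_iff_not_dvd.mpr hpM).symm)
  have hW1 : ((a : ZMod (p ^ k)) * (b : ZMod (p ^ k)) ^ (M - 1)) = 1 := by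
    apply orderOf_eq_one_iff.mp
    have h1 := orderOf_dvd_of_pow_eq_one hWM
    have h2 := orderOf_dvd_of_pow_eq_one hWp
    have h3 := Nat.dvd_gcd h1 h2
    rwa [Nat.Coprime.gcd_eq_one hcop, Nat.dvd_one] at h3
  have hABeq : ((a : ZMod (p ^ k))) = (b : ZMod (p ^ k)) := by
    rw [← hWB, hW1, one_mul]
  have hfin : ((a - b : ℤ) : ZMod (p ^ k)) = 0 := by push_cast; rw [sub_eq_zero]; exact hABeq
  exact (castdvd _).mpr hfin

/-- `F` is a Frobenius group with cyclic complement `C` and cyclic kernel `K`. -/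
def IsFrobOf {F : Type*} [Group F] (C K : Subgroup F) : Prop :=
  K.Normal ∧ IsCyclic ↥K ∧ K ≠ ⊥ ∧ IsCyclic ↥C ∧ C ≠ ⊥ ∧
  C ⊓ K = ⊥ ∧ C ⊔ K = ⊤ ∧
  ∀ c ∈ C, c ≠ 1 → ∀ k ∈ K, k ≠ 1 → c * k * c⁻¹ ≠ k


lemma frob_coprime {F : Type*} [Group F] [Finite F] {C K : Subgroup F}
    (h : IsFrobOf C K) {p : ℕ} (hp : p.Prime) (hpK : p ∣ Nat.card ↥K) :
    ¬ p ∣ Nat.card ↥C := by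
  obtain ⟨hN, hKc, hKbot, hCc, hCbot, hCK, hsup, hfpf⟩ := h
  intro hpC
  haveI : Fact p.Prime := ⟨hp⟩
  haveI := Fintype.ofFinite ↥C
  obtain ⟨c, hc⟩ := exists_prime_orderOf_dvd_card (G := ↥C) p
    (by rwa [← Nat.card_eq_fintype_card])
  obtain ⟨h0, hh0, hKeq⟩ := subgroup_gen K hKc
  have hcard : Nat.card ↥K = orderOf h0 := by rw [hKeq, Nat.card_zpowers]
  set n := orderOf h0 with hn
  have hpn : p ∣ n := hcard ▸ hpK
  have hn0 : n ≠ 0 := (orderOf_pos h0).ne'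
  have hcF : orderOf (c : F) = p := by
    have := orderOf_injective C.subtype C.subtype_injective c
    simp only [Subgroup.coe_subtype] at this
    rw [this]; exact hc
  have hconjmem : (c : F) * h0 * (c : F)⁻¹ ∈ K := hN.conj_mem h0 hh0 (c : F)
  rw [hKeq] at hconjmem
  obtain ⟨a, ha⟩ := Subgroup.mem_zpowers_iff.mp hconjmem
  have hconj : (c : F) * h0 * (c : F)⁻¹ = h0 ^ a := ha.symm
  -- a^p ≡ 1 mod n
  have hcp : (c : F) ^ p = 1 := by rw [← hcF]; exact pow_orderOf_eq_one _
  have hiter := conj_iter hconj p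
  rw [hcp] at hiter
  simp only [one_mul, inv_one, mul_one] at hiter
  have hmod : (1 : ℤ) ≡ a ^ p [ZMOD (n : ℤ)] := by
    have : h0 ^ (1 : ℤ) = h0 ^ (a ^ p) := by simpa using hiter
    simpa [hn] using zpow_eq_zpow_iff_modEq.mp this
  have hdvda : (p : ℤ) ∣ a ^ p - 1 := by
    have h1 : (n : ℤ) ∣ a ^ p - 1 := Int.ModEq.dvd hmod
    exact dvd_trans (Int.natCast_dvd_natCast.mpr hpn) h1
  -- Fermat: a ≡ 1 mod p
  have hap : ((a : ZMod p)) = 1 := by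
    have h1 : ((a ^ p - 1 : ℤ) : ZMod p) = 0 :=
      (ZMod.intCast_zmod_eq_zero_iff_dvd _ p).mpr hdvda
    push_cast at h1
    rw [sub_eq_zero] at h1
    rw [← ZMod.pow_card ((a : ZMod p))]
    exact h1
  have hpa1 : (p : ℤ) ∣ a - 1 := by
    have := (ZMod.intCast_eq_intCast_iff a 1 p).mp (by push_cast; exact hap)
    exact Int.ModEq.dvd this.symm
  -- the element of order p in K
  set kk := h0 ^ (n / p) with hkk
  have hordkk : orderOf kk = p := by
    rw [hkk, orderOf_pow, ← hn, Nat.gcd_eq_right (Nat.div_dvd_of_dvd hpn),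
      Nat.div_div_self hpn hn0]
  have hkkK : kk ∈ K := pow_mem hh0 _
  have hkk1 : kk ≠ 1 := by
    intro h'
    rw [h', orderOf_one] at hordkk
    exact hp.one_lt.ne' hordkk.symm
  have hconjkk : (c : F) * kk * (c : F)⁻¹ = kk := by
    have h1 : (c : F) * kk * (c : F)⁻¹ = kk ^ a := by
      rw [hkk, ← zpow_natCast h0 (n / p), ← conj_zpow, hconj, ← zpow_mul, ← zpow_mul,
        mul_comm]
    rw [h1]
    have : kk ^ (a : ℤ) = kk ^ (1 : ℤ) := by
      apply zpow_eq_zpow_iff_modEq.mpr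
      rw [hordkk]
      exact Int.ModEq.symm (Int.modEq_iff_dvd.mpr (by simpa using hpa1))
    simpa using this
  have hc1 : (c : F) ≠ 1 := by
    intro h'
    rw [h', orderOf_one] at hcF
    exact hp.one_lt.ne' hcF.symm
  exact hfpf (c : F) c.2 hc1 kk hkkK hkk1 hconjkk

theorem stmt14 {F₁ F₂ F₃ : Type*} [Group F₁] [Group F₂] [Group F₃]
    [Finite F₁] [Finite F₂] [Finite F₃]
    (C₁ K₁ : Subgroup F₁) (C₂ K₂ : Subgroup F₂) (C₃ K₃ : Subgroup F₃)
    (h₁ : IsFrobOf C₁ K₁) (h₂ : IsFrobOf C₂ K₂) (h₃ : IsFrobOf C₃ K₃)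
    (ρ₁ : F₁ →* F₃) (ρ₂ : F₂ →* F₃)
    (hρ₁ : Function.Surjective ρ₁) (hρ₂ : Function.Surjective ρ₂)
    (hC₁ : C₁.map ρ₁ = C₃) (hC₁inj : Set.InjOn ρ₁ (C₁ : Set F₁))
    (hC₂ : C₂.map ρ₂ = C₃) (hC₂inj : Set.InjOn ρ₂ (C₂ : Set F₂))
    (hK₁ : K₁.map ρ₁ = K₃) (hK₂ : K₂.map ρ₂ = K₃) :
    ∃ K' : Subgroup (F₁ × F₂),
      K' ≤ (ρ₁.comp (MonoidHom.fst F₁ F₂)).eqLocus (ρ₂.comp (MonoidHom.snd F₁ F₂)) ∧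
      IsCyclic ↥K' ∧ K' ≠ ⊥ ∧
      ((C₁.prod C₂ ⊓
          (ρ₁.comp (MonoidHom.fst F₁ F₂)).eqLocus (ρ₂.comp (MonoidHom.snd F₁ F₂)))
        ⊓ K' = ⊥) ∧
      (∀ h ∈ (C₁.prod C₂ ⊓
          (ρ₁.comp (MonoidHom.fst F₁ F₂)).eqLocus (ρ₂.comp (MonoidHom.snd F₁ F₂)))
          ⊔ K', ∀ k ∈ K', h * k * h⁻¹ ∈ K') ∧
      (∀ c ∈ C₁.prod C₂ ⊓
          (ρ₁.comp (MonoidHom.fst F₁ F₂)).eqLocus (ρ₂.comp (MonoidHom.snd F₁ F₂)),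
        c ≠ 1 → ∀ k ∈ K', k ≠ 1 → c * k * c⁻¹ ≠ k) ∧
      ((C₁.prod C₂ ⊓
          (ρ₁.comp (MonoidHom.fst F₁ F₂)).eqLocus (ρ₂.comp (MonoidHom.snd F₁ F₂)))
          ⊔ K').map (MonoidHom.fst F₁ F₂) = ⊤ := by
  obtain ⟨hK₁n, hK₁c, hK₁b, hC₁c, hC₁b, hCK₁, hsup₁, hfpf₁⟩ := id h₁
  obtain ⟨hK₂n, hK₂c, hK₂b, hC₂c, hC₂b, hCK₂, hsup₂, hfpf₂⟩ := id h₂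
  set L := (ρ₁.comp (MonoidHom.fst F₁ F₂)).eqLocus (ρ₂.comp (MonoidHom.snd F₁ F₂)) with hLdef
  have memL : ∀ x : F₁ × F₂, x ∈ L ↔ ρ₁ x.1 = ρ₂ x.2 := fun x => Iff.rfl
  obtain ⟨k₁, hk₁K, hK₁eq⟩ := subgroup_gen K₁ hK₁c
  obtain ⟨kg₂, hkg₂K, hK₂eq⟩ := subgroup_gen K₂ hK₂c
  set g : F₃ := ρ₁ k₁ with hgdef
  have hK₃eq : K₃ = Subgroup.zpowers g := by
    rw [← hK₁, hK₁eq, MonoidHom.map_zpowers]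
  set n₃ := orderOf g with hn₃def
  have hn₃0 : n₃ ≠ 0 := (orderOf_pos g).ne'
  -- preimage of g in K₂
  have hgK₃ : g ∈ K₂.map ρ₂ := by rw [hK₂, hK₃eq]; exact Subgroup.mem_zpowers g
  obtain ⟨k₂', hk₂'K, hk₂'g⟩ := Subgroup.mem_map.mp hgK₃
  set r := orderOf k₂' with hrdef
  have hr0 : r ≠ 0 := (orderOf_pos k₂').ne'
  have hn₃r : n₃ ∣ r := by
    rw [hn₃def, ← hk₂'g]; exact orderOf_map_dvd ρ₂ k₂'
  set s := Nat.gcd r (n₃ ^ r) with hsdef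
  have hsr : s ∣ r := Nat.gcd_dvd_left _ _
  have hs0 : s ≠ 0 := fun h => hr0 (Nat.eq_zero_of_gcd_eq_zero_left h)
  set t := r / s with htdef
  have hst : s * t = r := Nat.mul_div_cancel' hsr
  have hsprime : ∀ p : ℕ, p.Prime → p ∣ s → p ∣ n₃ := fun p pp hps =>
    pp.dvd_of_dvd_pow (hps.trans (Nat.gcd_dvd_right _ _))
  have hn₃s : n₃ ∣ s := Nat.dvd_gcd hn₃r (dvd_pow_self n₃ hr0)
  have htn₃ : Nat.Coprime t n₃ := by
    by_contra hcop
    obtain ⟨p, pp, hpt, hpn₃⟩ := Nat.Prime.not_coprime_iff_dvd.mp hcop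
    have h1 : s * p ∣ r := (Nat.dvd_div_iff_mul_dvd hsr).mp hpt
    have h2 : (s * p).factorization ≤ r.factorization :=
      (Nat.factorization_le_iff_dvd (mul_ne_zero hs0 pp.pos.ne') hr0).mpr h1
    have h3 := h2 p
    rw [Nat.factorization_mul hs0 pp.pos.ne'] at h3
    simp only [Finsupp.coe_add, Pi.add_apply, Nat.Prime.factorization_self pp] at h3
    have hsf : s.factorization p = r.factorization p := by
      rw [hsdef, Nat.factorization_gcd hr0 (pow_ne_zero _ hn₃0), Finsupp.inf_apply,
        Nat.factorization_pow]
      simp only [Finsupp.smul_apply, smul_eq_mul]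
      have hle : r.factorization p ≤ r * n₃.factorization p := by
        calc r.factorization p ≤ r := (Nat.factorization_lt p hr0).le
        _ ≤ r * n₃.factorization p :=
            Nat.le_mul_of_pos_right r (pp.factorization_pos_of_dvd hn₃0 hpn₃)
      exact min_eq_left hle
    omega
  set φ := Nat.totient n₃ with hφdef
  have hφ0 : 0 < φ := Nat.totient_pos.mpr (Nat.pos_of_ne_zero hn₃0)
  set k₂ := k₂' ^ (t ^ φ) with hk₂def
  have hk₂K : k₂ ∈ K₂ := pow_mem hk₂'K _
  have hρk₂ : ρ₂ k₂ = g := by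
    rw [hk₂def, map_pow, hk₂'g]
    have hmod : t ^ φ ≡ 1 [MOD n₃] := Nat.ModEq.pow_totient htn₃
    calc g ^ (t ^ φ) = g ^ 1 := pow_eq_pow_iff_modEq.mpr (by rwa [← hn₃def])
    _ = g := pow_one g
  have hk₂s : k₂ ^ s = 1 := by
    rw [hk₂def, ← pow_mul]
    have he : t ^ φ * s = r * t ^ (φ - 1) := by
      have h2 : t ^ φ = t ^ (φ - 1) * t := by
        rw [← pow_succ, Nat.sub_add_cancel hφ0]
      rw [h2, ← hst]; ring
    rw [he, pow_mul, hrdef, pow_orderOf_eq_one, one_pow]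
  set n₁ := orderOf k₁ with hn₁def
  set r₂ := orderOf k₂ with hr₂def
  have hr₂s : r₂ ∣ s := orderOf_dvd_of_pow_eq_one hk₂s
  have hk₁1 : k₁ ≠ 1 := by
    intro h
    exact hK₁b (by rw [hK₁eq, h, Subgroup.zpowers_eq_bot])
  have hkeq : ρ₁ k₁ = ρ₂ k₂ := by rw [hρk₂]
  have hcard₁ : Nat.card ↥K₁ = n₁ := by rw [hK₁eq, Nat.card_zpowers]
  have hr₂card : r₂ ∣ Nat.card ↥K₂ := by
    have h1 := orderOf_dvd_natCard (⟨k₂, hk₂K⟩ : ↥K₂)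
    rwa [← orderOf_injective K₂.subtype K₂.subtype_injective ⟨k₂, hk₂K⟩] at h1
  set M := Nat.card ↥C₁ * Nat.card ↥C₂ with hMdef
  have hM0 : 0 < M := Nat.mul_pos Nat.card_pos Nat.card_pos
  -- the key conjugation-compatibility lemma
  have key : ∀ c₁ c₂ : _, c₁ ∈ C₁ → c₂ ∈ C₂ → ρ₁ c₁ = ρ₂ c₂ →
      ∃ m : ℤ, c₁ * k₁ * c₁⁻¹ = k₁ ^ m ∧ c₂ * k₂ * c₂⁻¹ = k₂ ^ m := by
    intro c₁ c₂ hc₁ hc₂ hρc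
    obtain ⟨a, ha'⟩ := Subgroup.mem_zpowers_iff.mp (hK₁eq ▸ hK₁n.conj_mem k₁ hk₁K c₁)
    have ha : c₁ * k₁ * c₁⁻¹ = k₁ ^ a := ha'.symm
    obtain ⟨β, hβ'⟩ := Subgroup.mem_zpowers_iff.mp (hK₂eq ▸ hK₂n.conj_mem kg₂ hkg₂K c₂)
    have hβ : c₂ * kg₂ * c₂⁻¹ = kg₂ ^ β := hβ'.symm
    obtain ⟨u, hu⟩ := Subgroup.mem_zpowers_iff.mp (hK₂eq ▸ hk₂K)
    have hb : c₂ * k₂ * c₂⁻¹ = k₂ ^ β := by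
      rw [← hu, ← conj_zpow, hβ, ← zpow_mul, ← zpow_mul, mul_comm]
    -- torsion
    have hc₁M : c₁ ^ M = 1 := by
      apply orderOf_dvd_iff_pow_eq_one.mp
      have h1 := orderOf_dvd_natCard (⟨c₁, hc₁⟩ : ↥C₁)
      rw [← orderOf_injective C₁.subtype C₁.subtype_injective ⟨c₁, hc₁⟩] at h1
      exact h1.trans (dvd_mul_right _ _)
    have hc₂M : c₂ ^ M = 1 := by
      apply orderOf_dvd_iff_pow_eq_one.mp
      have h1 := orderOf_dvd_natCard (⟨c₂, hc₂⟩ : ↥C₂)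
      rw [← orderOf_injective C₂.subtype C₂.subtype_injective ⟨c₂, hc₂⟩] at h1
      exact h1.trans (dvd_mul_left _ _)
    have haM : (n₁ : ℤ) ∣ a ^ M - 1 := by
      have h1 := conj_iter ha M
      rw [hc₁M] at h1
      simp only [one_mul, inv_one, mul_one] at h1
      have h2 : k₁ ^ (1 : ℤ) = k₁ ^ (a ^ M) := by simpa using h1
      exact Int.ModEq.dvd (by simpa [hn₁def] using zpow_eq_zpow_iff_modEq.mp h2)
    have hbM : (r₂ : ℤ) ∣ β ^ M - 1 := by
      have h1 := conj_iter hb M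
      rw [hc₂M] at h1
      simp only [one_mul, inv_one, mul_one] at h1
      have h2 : k₂ ^ (1 : ℤ) = k₂ ^ (β ^ M) := by simpa using h1
      exact Int.ModEq.dvd (by simpa [hr₂def] using zpow_eq_zpow_iff_modEq.mp h2)
    -- relation mod n₃
    have hgab : (n₃ : ℤ) ∣ a - β := by
      have e1 : ρ₁ c₁ * g * (ρ₁ c₁)⁻¹ = g ^ a := by
        rw [hgdef, ← map_inv, ← map_mul, ← map_mul, ha, map_zpow]
      have e2 : ρ₁ c₁ * g * (ρ₁ c₁)⁻¹ = g ^ β := by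
        rw [hρc, ← hρk₂, ← map_inv, ← map_mul, ← map_mul, hb, map_zpow]
      have e3 : g ^ β = g ^ a := by rw [← e1, ← e2]
      have := zpow_eq_zpow_iff_modEq.mp e3
      exact Int.ModEq.dvd (by simpa [hn₃def] using this)
    -- per-prime: gcd n₁ r₂ divides a - β
    set d := Nat.gcd n₁ r₂ with hddef
    have hd : (d : ℤ) ∣ a - β := by
      apply Int.dvd_natAbs.mp
      apply Int.natCast_dvd_natCast.mpr
      apply (Nat.dvd_iff_prime_pow_dvd_dvd (a - β).natAbs d).mpr
      intro p k pp hpk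
      rcases Nat.eq_zero_or_pos k with hk0 | hk1
      · simp [hk0]
      have pp' : p.Prime := pp
      have hpd : p ∣ d := (dvd_pow_self p hk1.ne').trans hpk
      have hpn₁ : p ∣ n₁ := hpd.trans (Nat.gcd_dvd_left _ _)
      have hpr₂ : p ∣ r₂ := hpd.trans (Nat.gcd_dvd_right _ _)
      have hpn₃ : p ∣ n₃ := hsprime p pp' (hpr₂.trans hr₂s)
      have hpM : ¬ p ∣ M := by
        rw [hMdef]
        rw [pp'.dvd_mul]
        push_neg
        constructor
        · exact frob_coprime h₁ pp' (hcard₁ ▸ hpn₁)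
        · exact frob_coprime h₂ pp' (hpr₂.trans hr₂card)
      have hkd₁ : ((p : ℤ)) ^ k ∣ a ^ M - 1 := by
        refine dvd_trans ?_ haM
        have : (p : ℤ) ^ k ∣ (n₁ : ℤ) := by
          exact_mod_cast Int.natCast_dvd_natCast.mpr (hpk.trans (Nat.gcd_dvd_left _ _))
        exact this
      have hkd₂ : ((p : ℤ)) ^ k ∣ β ^ M - 1 := by
        refine dvd_trans ?_ hbM
        exact_mod_cast Int.natCast_dvd_natCast.mpr (hpk.trans (Nat.gcd_dvd_right _ _))
      have hab : (p : ℤ) ∣ a - β := (Int.natCast_dvd_natCast.mpr hpn₃).trans hgab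
      have := per_prime p pp' k hk1 M hM0 hpM a β hkd₁ hkd₂ hab
      rw [← Int.dvd_natAbs] at this
      exact_mod_cast this
    -- Bezout
    obtain ⟨q, hq⟩ := hd
    set A := Int.gcdA (n₁ : ℤ) (r₂ : ℤ) with hAdef
    set B := Int.gcdB (n₁ : ℤ) (r₂ : ℤ) with hBdef
    have hbez : (d : ℤ) = (n₁ : ℤ) * A + (r₂ : ℤ) * B := by
      rw [hddef]
      push_cast [← Int.gcd_natCast_natCast n₁ r₂]
      exact Int.gcd_eq_gcd_ab _ _
    refine ⟨a - (n₁ : ℤ) * A * q, ?_, ?_⟩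
    · rw [ha]
      apply zpow_eq_zpow_iff_modEq.mpr
      apply Int.modEq_iff_dvd.mpr
      rw [← hn₁def]
      exact ⟨-(A * q), by ring⟩
    · rw [hb]
      apply zpow_eq_zpow_iff_modEq.mpr
      apply Int.modEq_iff_dvd.mpr
      rw [← hr₂def]
      have : a - (n₁ : ℤ) * A * q - β = (r₂ : ℤ) * (B * q) := by
        have h1 : a - β = (d : ℤ) * q := hq
        have h2 : (d : ℤ) * q = (n₁ : ℤ) * A * q + (r₂ : ℤ) * B * q := by rw [hbez]; ring
        linarith [h1, h2]
      exact ⟨B * q, by linarith [this]⟩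
    -- done key
  -- the subgroup
  refine ⟨Subgroup.zpowers ((k₁, k₂) : F₁ × F₂), ?_, zpowers_isCyclic _, ?_, ?_, ?_, ?_, ?_⟩
  · exact Subgroup.zpowers_le.mpr ((memL (k₁, k₂)).mpr hkeq)
  · rw [ne_eq, Subgroup.zpowers_eq_bot]
    intro h
    exact hk₁1 (congrArg Prod.fst h)
  · -- trivial intersection
    rw [eq_bot_iff]
    intro x hx
    obtain ⟨hx1, hx2⟩ := Subgroup.mem_inf.mp hx
    obtain ⟨i, hi⟩ := Subgroup.mem_zpowers_iff.mp hx2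
    obtain ⟨hxp, _⟩ := Subgroup.mem_inf.mp hx1
    obtain ⟨hxC₁, hxC₂⟩ := Subgroup.mem_prod.mp hxp
    have hx1' : x.1 = k₁ ^ i := (congrArg Prod.fst hi).symm
    have hx2' : x.2 = k₂ ^ i := (congrArg Prod.snd hi).symm
    have hm₁ : x.1 ∈ C₁ ⊓ K₁ := Subgroup.mem_inf.mpr
      ⟨hxC₁, by rw [hx1', hK₁eq]; exact zpow_mem (Subgroup.mem_zpowers k₁) i⟩
    have hm₂ : x.2 ∈ C₂ ⊓ K₂ := Subgroup.mem_inf.mpr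
      ⟨hxC₂, by rw [hx2']; exact zpow_mem hk₂K i⟩
    rw [hCK₁, Subgroup.mem_bot] at hm₁
    rw [hCK₂, Subgroup.mem_bot] at hm₂
    rw [Subgroup.mem_bot]
    exact Prod.ext hm₁ hm₂
  · -- normalization
    have hconj : ∀ c ∈ C₁.prod C₂ ⊓ L, ∀ x ∈ Subgroup.zpowers ((k₁, k₂) : F₁ × F₂),
        c * x * c⁻¹ ∈ Subgroup.zpowers ((k₁, k₂) : F₁ × F₂) := by
      intro c hc x hx
      obtain ⟨hcp, hcL⟩ := Subgroup.mem_inf.mp hc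
      obtain ⟨hcC₁, hcC₂⟩ := Subgroup.mem_prod.mp hcp
      obtain ⟨i, hi⟩ := Subgroup.mem_zpowers_iff.mp hx
      obtain ⟨m, hm₁, hm₂⟩ := key c.1 c.2 hcC₁ hcC₂ ((memL c).mp hcL)
      have hcep : c * (k₁, k₂) * c⁻¹ = ((k₁, k₂) : F₁ × F₂) ^ m := by
        apply Prod.ext
        · exact hm₁
        · exact hm₂
      rw [← hi, ← conj_zpow, hcep, ← zpow_mul]
      exact zpow_mem (Subgroup.mem_zpowers _) _
    have hnorm : (C₁.prod C₂ ⊓ L) ⊔ Subgroup.zpowers ((k₁, k₂) : F₁ × F₂) ≤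
        Subgroup.normalizer (Subgroup.zpowers ((k₁, k₂) : F₁ × F₂) : Set (F₁ × F₂)) := by
      apply sup_le
      · intro c hc
        rw [Subgroup.mem_normalizer_iff]
        intro x
        constructor
        · exact fun hx => hconj c hc x hx
        · intro hx
          have := hconj c⁻¹ (inv_mem hc) _ hx
          simpa [mul_assoc] using this
      · exact Subgroup.le_normalizer
    intro h hh k hk
    exact (Subgroup.mem_normalizer_iff.mp (hnorm hh) k).mp hk
  · -- fixed point free
    intro c hc hc1 k hk hk1 heq
    obtain ⟨hcp, hcL⟩ := Subgroup.mem_inf.mp hc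
    obtain ⟨hcC₁, hcC₂⟩ := Subgroup.mem_prod.mp hcp
    have hρc : ρ₁ c.1 = ρ₂ c.2 := (memL c).mp hcL
    have hciff : c.1 = 1 ↔ c.2 = 1 := by
      constructor
      · intro h
        apply hC₂inj hcC₂ (one_mem C₂)
        rw [hρc.symm, h, map_one, map_one]
      · intro h
        apply hC₁inj hcC₁ (one_mem C₁)
        rw [hρc, h, map_one, map_one]
    have hc11 : c.1 ≠ 1 := by
      intro h
      exact hc1 (Prod.ext h (hciff.mp h))
    have hc21 : c.2 ≠ 1 := fun h => hc11 (hciff.mpr h)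
    obtain ⟨i, hi⟩ := Subgroup.mem_zpowers_iff.mp hk
    have hk1' : k.1 = k₁ ^ i := (congrArg Prod.fst hi).symm
    have hk2' : k.2 = k₂ ^ i := (congrArg Prod.snd hi).symm
    have heq1 : c.1 * k.1 * c.1⁻¹ = k.1 := congrArg Prod.fst heq
    have heq2 : c.2 * k.2 * c.2⁻¹ = k.2 := congrArg Prod.snd heq
    rcases eq_or_ne k.1 1 with hk11 | hk11
    · have hk21 : k.2 ≠ 1 := by
        intro h
        exact hk1 (Prod.ext hk11 h)
      exact hfpf₂ c.2 hcC₂ hc21 k.2 (by rw [hk2']; exact zpow_mem hk₂K i) hk21 heq2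
    · exact hfpf₁ c.1 hcC₁ hc11 k.1
        (by rw [hk1', hK₁eq]; exact zpow_mem (Subgroup.mem_zpowers k₁) i) hk11 heq1
  · -- surjectivity of the first projection
    rw [Subgroup.map_sup, MonoidHom.map_zpowers]
    have hmapK : Subgroup.zpowers ((MonoidHom.fst F₁ F₂) (k₁, k₂)) = K₁ := by
      simp only [MonoidHom.coe_fst]
      exact hK₁eq.symm
    have hmapC : C₁ ≤ (C₁.prod C₂ ⊓ L).map (MonoidHom.fst F₁ F₂) := by
      intro c₁ hc₁
      have : ρ₁ c₁ ∈ C₂.map ρ₂ := by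
        rw [hC₂, ← hC₁]
        exact Subgroup.mem_map.mpr ⟨c₁, hc₁, rfl⟩
      obtain ⟨c₂, hc₂, hc₂eq⟩ := Subgroup.mem_map.mp this
      exact Subgroup.mem_map.mpr ⟨(c₁, c₂),
        Subgroup.mem_inf.mpr ⟨Subgroup.mem_prod.mpr ⟨hc₁, hc₂⟩,
          (memL (c₁, c₂)).mpr hc₂eq.symm⟩, rfl⟩
    apply le_antisymm le_top
    calc (⊤ : Subgroup F₁) = C₁ ⊔ K₁ := hsup₁.symm
    _ ≤ (C₁.prod C₂ ⊓ L).map (MonoidHom.fst F₁ F₂) ⊔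
        Subgroup.zpowers ((MonoidHom.fst F₁ F₂) (k₁, k₂)) :=
        sup_le_sup hmapC (le_of_eq hmapK.symm)
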